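/- Let n ≥ 1 be an integer, δ > 0 a real number, and m = n². The set function f on subsets of [m] defined by f(T) := max( min(|T|, (1+δ)·n^{4δ}), (1+δ)·|T| / n^{1−2δ} ) is nonnegative, normalized (f(∅) = 0), monotone (f(A) ≤ f(B) whenever A ⊆ B), and subadditive (f(A ∪ B) ≤ f(A) + f(B) for all A, B ⊆ [m]). -/

import Mathlib

/-- The function `f(T) = max(min(|T|, (1+δ)n^{4δ}), (1+δ)|T|/n^{1−2δ})` on subsets of `[n²]`
is nonnegative, normalized, monotone and subadditive. -/
theorem stmt_11 (n : ℕ) (hn : 1 ≤ n) (δ : ℝ) (hδ : 0 < δ)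
    (f : Finset (Fin (n ^ 2)) → ℝ)
    (hf : ∀ T : Finset (Fin (n ^ 2)),
      f T = max (min (T.card : ℝ) ((1 + δ) * (n : ℝ) ^ (4 * δ)))
              ((1 + δ) * (T.card : ℝ) / (n : ℝ) ^ (1 - 2 * δ))) :
    (∀ S : Finset (Fin (n ^ 2)), 0 ≤ f S) ∧
    (f ∅ = 0) ∧
    (∀ A B : Finset (Fin (n ^ 2)), A ⊆ B → f A ≤ f B) ∧
    (∀ A B : Finset (Fin (n ^ 2)), f (A ∪ B) ≤ f A + f B) := by
  have hn0 : (0:ℝ) < n := by exact_mod_cast hn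
  have hδ1 : (0:ℝ) < 1 + δ := by linarith
  have hp1 : (0:ℝ) < (n:ℝ) ^ (4 * δ) := Real.rpow_pos_of_pos hn0 _
  have hp2 : (0:ℝ) < (n:ℝ) ^ (1 - 2 * δ) := Real.rpow_pos_of_pos hn0 _
  set c := (1 + δ) * (n : ℝ) ^ (4 * δ) with hcdef
  set e := (n : ℝ) ^ (1 - 2 * δ) with hedef
  have hc : 0 ≤ c := le_of_lt (mul_pos hδ1 hp1)
  -- monotonicity of the underlying real function
  have hg : ∀ s t : ℝ, s ≤ t →
      max (min s c) ((1 + δ) * s / e) ≤ max (min t c) ((1 + δ) * t / e) := by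
    intro s t hst
    apply max_le_max (min_le_min hst le_rfl)
    gcongr
  refine ⟨?_, ?_, ?_, ?_⟩
  · intro S
    rw [hf S]
    refine le_max_of_le_right ?_
    positivity
  · rw [hf ∅]
    simp [min_eq_left hc]
  · intro A B hAB
    rw [hf A, hf B]
    exact hg _ _ (by exact_mod_cast Finset.card_le_card hAB)
  · intro A B
    rw [hf (A ∪ B), hf A, hf B]
    set s : ℝ := (A.card : ℝ) with hs
    set t : ℝ := (B.card : ℝ) with ht
    have hs0 : 0 ≤ s := by positivity
    have ht0 : 0 ≤ t := by positivity
    have hcard : ((A ∪ B).card : ℝ) ≤ s + t := by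
      rw [hs, ht]; exact_mod_cast Finset.card_union_le A B
    refine (hg _ _ hcard).trans ?_
    have hmin : min (s + t) c ≤ min s c + min t c := by
      rcases le_total (s + t) c with h | h
      · rcases le_total s c with h1 | h1 <;> rcases le_total t c with h2 | h2 <;>
          rw [min_def, min_def, min_def] <;> split_ifs <;> linarith
      · rcases le_total s c with h1 | h1 <;> rcases le_total t c with h2 | h2 <;>
          rw [min_def, min_def, min_def] <;> split_ifs <;> linarith
    have hdiv : (1 + δ) * (s + t) / e = (1 + δ) * s / e + (1 + δ) * t / e := by ring
    apply max_le
    · exact hmin.trans (add_le_add (le_max_left _ _) (le_max_left _ _))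
    · rw [hdiv]
      exact add_le_add (le_max_right _ _) (le_max_right _ _)
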